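/- Let ψ : ℝ² → S² be the hedgehog lump with profile z(r) = -1 + 2e^{-r²/2}. There exist constants C > 0 and R* > 0 such that for all points with R = √(X²+Y²) ≥ R*, all first partial derivatives of ψ are bounded by C·R·e^{-R²/4} and all second partial derivatives are bounded by C·R²·e^{-R²/4}. -/

import Mathlib

open Real

/-- The hedgehog lump profile `z(r) = -1 + 2 e^{-r²/2}`. -/
noncomputable def zprof (r : ℝ) : ℝ := -1 + 2 * Real.exp (-r ^ 2 / 2)

/-- The hedgehog lump in Cartesian coordinates. -/
noncomputable def psiLump (p : ℝ × ℝ) : ℝ × ℝ × ℝ :=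
  (Real.sqrt (1 - zprof (Real.sqrt (p.1 ^ 2 + p.2 ^ 2)) ^ 2) * p.1 / Real.sqrt (p.1 ^ 2 + p.2 ^ 2),
   Real.sqrt (1 - zprof (Real.sqrt (p.1 ^ 2 + p.2 ^ 2)) ^ 2) * p.2 / Real.sqrt (p.1 ^ 2 + p.2 ^ 2),
   zprof (Real.sqrt (p.1 ^ 2 + p.2 ^ 2)))

namespace HH

noncomputable def uu (s : ℝ) : ℝ := Real.sqrt (1 - Real.exp (-s/2))
noncomputable def u1 (s : ℝ) : ℝ := Real.exp (-s/2) / (4 * uu s)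
noncomputable def u2 (s : ℝ) : ℝ :=
  -Real.exp (-s/2) / (8 * uu s) - Real.exp (-s/2) * u1 s / (4 * uu s ^ 2)
noncomputable def vv (s : ℝ) : ℝ := uu s / Real.sqrt s
noncomputable def nN (s : ℝ) : ℝ := u1 s * Real.sqrt s - uu s * (1/(2*Real.sqrt s))
noncomputable def v1 (s : ℝ) : ℝ := nN s / s
noncomputable def nN' (s : ℝ) : ℝ := u2 s * Real.sqrt s + uu s * (1/(4*(s*Real.sqrt s)))
noncomputable def v2 (s : ℝ) : ℝ := (nN' s * s - nN s * 1) / s ^ 2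
noncomputable def aa (s : ℝ) : ℝ := 2 * Real.exp (-s/4) * vv s
noncomputable def a1 (s : ℝ) : ℝ := -Real.exp (-s/4)/2 * vv s + 2 * Real.exp (-s/4) * v1 s
noncomputable def a2 (s : ℝ) : ℝ :=
  Real.exp (-s/4)/8 * vv s - Real.exp (-s/4)/2 * v1 s - Real.exp (-s/4)/2 * v1 s
    + 2 * Real.exp (-s/4) * v2 s
noncomputable def GG (s : ℝ) : ℝ := -1 + 2 * Real.exp (-s/2)

lemma hw0 (s : ℝ) (hs : 0 < s) : 0 < 1 - Real.exp (-s/2) := by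
  have : Real.exp (-s/2) < Real.exp 0 := Real.exp_lt_exp.mpr (by linarith)
  simp only [Real.exp_zero] at this; linarith

lemma hu_pos (s : ℝ) (hs : 0 < s) : 0 < uu s := Real.sqrt_pos.mpr (hw0 s hs)
lemma hr_pos (s : ℝ) (hs : 0 < s) : 0 < Real.sqrt s := Real.sqrt_pos.mpr hs
lemma hrsq (s : ℝ) (hs : 0 < s) : Real.sqrt s ^ 2 = s := Real.sq_sqrt hs.le

lemma hd_exp2 (s : ℝ) : HasDerivAt (fun t : ℝ => Real.exp (-t/2)) (-(Real.exp (-s/2)/2)) s := by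
  have h : HasDerivAt (fun t : ℝ => -t/2) (-1/2 : ℝ) s := by
    simpa using ((hasDerivAt_id s).neg.div_const 2)
  have := h.exp
  convert this using 1; ring

lemma hd_exp4 (s : ℝ) : HasDerivAt (fun t : ℝ => Real.exp (-t/4)) (-(Real.exp (-s/4)/4)) s := by
  have h : HasDerivAt (fun t : ℝ => -t/4) (-1/4 : ℝ) s := by
    simpa using ((hasDerivAt_id s).neg.div_const 4)
  have := h.exp
  convert this using 1; ring

lemma hd_uu (s : ℝ) (hs : 0 < s) : HasDerivAt uu (u1 s) s := by
  have hw : HasDerivAt (fun t : ℝ => 1 - Real.exp (-t/2)) (Real.exp (-s/2)/2) s := by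
    have := (hd_exp2 s).const_sub 1
    refine this.congr_deriv ?_; ring
  have h := hw.sqrt (ne_of_gt (hw0 s hs))
  have : HasDerivAt uu (Real.exp (-s/2)/2 / (2 * Real.sqrt (1 - Real.exp (-s/2)))) s := h
  convert this using 1
  unfold u1 uu; ring

lemma hd_u1 (s : ℝ) (hs : 0 < s) : HasDerivAt u1 (u2 s) s := by
  have hden : HasDerivAt (fun t : ℝ => 4 * uu t) (4 * u1 s) s := (hd_uu s hs).const_mul 4
  have hne : uu s ≠ 0 := ne_of_gt (hu_pos s hs)
  have h := (hd_exp2 s).div hden (by positivity)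
  have : HasDerivAt u1 ((-(Real.exp (-s/2)/2) * (4 * uu s) - Real.exp (-s/2) * (4 * u1 s)) / (4 * uu s)^2) s := h
  convert this using 1
  unfold u2
  field_simp
  ring

lemma hd_vv (s : ℝ) (hs : 0 < s) : HasDerivAt vv (v1 s) s := by
  have hne : Real.sqrt s ≠ 0 := ne_of_gt (hr_pos s hs)
  have h := (hd_uu s hs).div (Real.hasDerivAt_sqrt (ne_of_gt hs)) hne
  have : HasDerivAt vv ((u1 s * Real.sqrt s - uu s * (1 / (2 * Real.sqrt s))) / (Real.sqrt s)^2) s := h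
  convert this using 1
  unfold v1 nN
  rw [hrsq s hs]

lemma hd_nN (s : ℝ) (hs : 0 < s) : HasDerivAt nN (nN' s) s := by
  have hne : Real.sqrt s ≠ 0 := ne_of_gt (hr_pos s hs)
  have hinv : HasDerivAt (fun t : ℝ => 1/(2*Real.sqrt t)) (-(1/(4*(s*Real.sqrt s)))) s := by
    have h2 : HasDerivAt (fun t : ℝ => 2*Real.sqrt t) (2 * (1/(2*Real.sqrt s))) s :=
      (Real.hasDerivAt_sqrt (ne_of_gt hs)).const_mul 2
    have h3 := h2.inv (by positivity)
    have : HasDerivAt (fun t : ℝ => 1/(2*Real.sqrt t)) (-(2 * (1/(2*Real.sqrt s))) / (2*Real.sqrt s)^2) s := by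
      exact h3.congr_of_eventuallyEq (Filter.Eventually.of_forall fun t => by simp)
    convert this using 1
    have := hrsq s hs
    field_simp
    nlinarith [hrsq s hs, hr_pos s hs]
  have h := ((hd_u1 s hs).mul (Real.hasDerivAt_sqrt (ne_of_gt hs))).sub ((hd_uu s hs).mul hinv)
  refine h.congr_deriv ?_
  unfold nN' u1
  have hune : uu s ≠ 0 := ne_of_gt (hu_pos s hs)
  field_simp
  ring

lemma hd_v1 (s : ℝ) (hs : 0 < s) : HasDerivAt v1 (v2 s) s := by
  have h := (hd_nN s hs).div (hasDerivAt_id s) (ne_of_gt hs)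
  have : HasDerivAt v1 ((nN' s * s - nN s * 1) / s^2) s := h
  exact this

lemma hd_aa (s : ℝ) (hs : 0 < s) : HasDerivAt aa (a1 s) s := by
  have h := ((hd_exp4 s).const_mul 2).mul (hd_vv s hs)
  refine h.congr_deriv ?_
  unfold a1; ring

lemma hd_a1 (s : ℝ) (hs : 0 < s) : HasDerivAt a1 (a2 s) s := by
  have h1 : HasDerivAt (fun t : ℝ => -Real.exp (-t/4)/2) (Real.exp (-s/4)/8) s := by
    have := ((hd_exp4 s).neg.div_const 2)
    refine this.congr_deriv ?_; ring
  have h := (h1.mul (hd_vv s hs)).add (((hd_exp4 s).const_mul 2).mul (hd_v1 s hs))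
  refine h.congr_deriv ?_
  unfold a2; ring

lemma hd_GG (s : ℝ) : HasDerivAt GG (-Real.exp (-s/2)) s := by
  have := ((hd_exp2 s).const_mul 2).const_add (-1)
  have h2 : HasDerivAt GG (2 * -(Real.exp (-s/2)/2)) s := this
  convert h2 using 1; ring

section bounds
variable {s : ℝ}

lemma hs0 (hs : 1 ≤ s) : 0 < s := by linarith
lemma hr1 (hs : 1 ≤ s) : 1 ≤ Real.sqrt s := by
  rw [show (1:ℝ) = Real.sqrt 1 by simp]
  exact Real.sqrt_le_sqrt hs

lemma ht1 (hs : 1 ≤ s) : Real.exp (-s/2) ≤ 1 := by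
  rw [show (1:ℝ) = Real.exp 0 by simp]
  exact Real.exp_le_exp.mpr (by linarith)

lemma hu_ub (hs : 1 ≤ s) : uu s ≤ 1 := by
  rw [show (1:ℝ) = Real.sqrt 1 by simp]
  exact Real.sqrt_le_sqrt (by nlinarith [Real.exp_pos (-s/2)])

lemma hu_lb (hs : 1 ≤ s) : 1/2 ≤ uu s := by
  have h1 : Real.exp (-s/2) ≤ Real.exp (-1/2) := Real.exp_le_exp.mpr (by linarith)
  have h2 : Real.exp (-1/2) ≤ 3/4 := by
    rw [show (-1:ℝ)/2 = -(1/2) by ring, Real.exp_neg]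
    have : (3:ℝ)/2 ≤ Real.exp (1/2) := by
      have := Real.add_one_le_exp (1/2 : ℝ); linarith
    rw [inv_le_comm₀ (by positivity) (by norm_num)]
    linarith
  have : (1:ℝ)/4 ≤ 1 - Real.exp (-s/2) := by linarith
  calc (1:ℝ)/2 = Real.sqrt (1/4) := by
        rw [show (1:ℝ)/4 = (1/2)^2 by norm_num, Real.sqrt_sq (by norm_num)]
    _ ≤ uu s := Real.sqrt_le_sqrt this

lemma hu1_b (hs : 1 ≤ s) : |u1 s| ≤ 1/2 := by
  have hu := hu_lb hs
  have ht := ht1 hs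
  have htp := Real.exp_pos (-s/2)
  rw [u1, abs_div, div_le_iff₀ (by positivity : (0:ℝ) < |4 * uu s|)]
  rw [abs_of_pos htp, abs_of_pos (by nlinarith : (0:ℝ) < 4 * uu s)]
  nlinarith

lemma hu2_b (hs : 1 ≤ s) : |u2 s| ≤ 1 := by
  have hu := hu_lb hs
  have hub := hu_ub hs
  have ht := ht1 hs
  have htp := Real.exp_pos (-s/2)
  have h1 : |(-Real.exp (-s/2)) / (8 * uu s)| ≤ 1/4 := by
    rw [abs_div, div_le_iff₀ (by positivity : (0:ℝ) < |8 * uu s|)]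
    rw [abs_neg, abs_of_pos htp, abs_of_pos (by nlinarith : (0:ℝ) < 8 * uu s)]
    nlinarith
  have h2 : |Real.exp (-s/2) * u1 s / (4 * uu s ^ 2)| ≤ 3/4 := by
    have := hu1_b hs
    rw [abs_div, div_le_iff₀ (by positivity : (0:ℝ) < |4 * uu s ^ 2|)]
    rw [abs_mul, abs_of_pos htp, abs_of_pos (by positivity : (0:ℝ) < 4 * uu s ^ 2)]
    nlinarith [abs_nonneg (u1 s)]
  calc |u2 s| ≤ |(-Real.exp (-s/2)) / (8 * uu s)| + |Real.exp (-s/2) * u1 s / (4 * uu s ^ 2)| := by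
        rw [u2]; exact abs_sub _ _
    _ ≤ 1 := by linarith

lemma hv_b (hs : 1 ≤ s) : Real.sqrt s * |vv s| ≤ 1 := by
  have hr := hr_pos s (hs0 hs)
  have hu := hu_pos s (hs0 hs)
  rw [vv, abs_div, abs_of_pos hu, abs_of_pos hr]
  rw [mul_div_cancel₀ _ (ne_of_gt hr)]
  exact hu_ub hs

lemma hnN_b (hs : 1 ≤ s) : |nN s| ≤ Real.sqrt s := by
  have hr := hr_pos s (hs0 hs)
  have hr1' := hr1 hs
  have hu := hu_pos s (hs0 hs)
  have hub := hu_ub hs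
  have h1 : |u1 s * Real.sqrt s| ≤ Real.sqrt s / 2 := by
    rw [abs_mul, abs_of_pos hr]
    nlinarith [hu1_b hs, abs_nonneg (u1 s)]
  have h2 : |uu s * (1/(2*Real.sqrt s))| ≤ 1/2 := by
    rw [abs_mul, abs_of_pos hu, abs_of_pos (by positivity : (0:ℝ) < 1/(2*Real.sqrt s))]
    rw [show uu s * (1/(2*Real.sqrt s)) = uu s / (2 * Real.sqrt s) by ring,
      div_le_iff₀ (by positivity)]
    nlinarith
  calc |nN s| ≤ |u1 s * Real.sqrt s| + |uu s * (1/(2*Real.sqrt s))| := abs_sub _ _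
    _ ≤ Real.sqrt s := by nlinarith

lemma hv1_b (hs : 1 ≤ s) : Real.sqrt s * |v1 s| ≤ 1 := by
  have hr := hr_pos s (hs0 hs)
  have hsq := hrsq s (hs0 hs)
  rw [v1, abs_div, abs_of_pos (hs0 hs)]
  rw [show Real.sqrt s * (|nN s| / s) = Real.sqrt s * |nN s| / s by ring,
    div_le_one (hs0 hs)]
  nlinarith [hnN_b hs, abs_nonneg (nN s)]

lemma hnN'_b (hs : 1 ≤ s) : |nN' s| ≤ 2 * Real.sqrt s := by
  have hr := hr_pos s (hs0 hs)
  have hr1' := hr1 hs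
  have hu := hu_pos s (hs0 hs)
  have hub := hu_ub hs
  have h1 : |u2 s * Real.sqrt s| ≤ Real.sqrt s := by
    rw [abs_mul, abs_of_pos hr]
    nlinarith [hu2_b hs, abs_nonneg (u2 s)]
  have h2 : |uu s * (1/(4*(s*Real.sqrt s)))| ≤ 1 := by
    rw [abs_mul, abs_of_pos hu, abs_of_pos (by positivity : (0:ℝ) < 1/(4*(s*Real.sqrt s)))]
    rw [show uu s * (1/(4*(s*Real.sqrt s))) = uu s / (4*(s*Real.sqrt s)) by ring,
      div_le_one (by positivity)]
    nlinarith
  calc |nN' s| ≤ |u2 s * Real.sqrt s| + |uu s * (1/(4*(s*Real.sqrt s)))| := abs_add_le _ _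
    _ ≤ 2 * Real.sqrt s := by nlinarith

lemma hv2_b (hs : 1 ≤ s) : Real.sqrt s * |v2 s| ≤ 3 := by
  have hr := hr_pos s (hs0 hs)
  have hr1' := hr1 hs
  have hsq := hrsq s (hs0 hs)
  have hs' := hs0 hs
  have h1 : |nN' s * s - nN s * 1| ≤ 3 * Real.sqrt s * s := by
    calc |nN' s * s - nN s * 1| ≤ |nN' s * s| + |nN s * 1| := abs_sub _ _
      _ = |nN' s| * s + |nN s| := by rw [abs_mul, abs_of_pos hs']; simp
      _ ≤ 2 * Real.sqrt s * s + Real.sqrt s := by nlinarith [hnN'_b hs, hnN_b hs]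
      _ ≤ 3 * Real.sqrt s * s := by nlinarith
  rw [v2, abs_div, abs_of_pos (by positivity : (0:ℝ) < s^2)]
  rw [show Real.sqrt s * (|nN' s * s - nN s * 1| / s^2) = Real.sqrt s * |nN' s * s - nN s * 1| / s^2 by ring,
    div_le_iff₀ (by positivity)]
  nlinarith [abs_nonneg (nN' s * s - nN s * 1)]

lemma ha_b (hs : 1 ≤ s) : Real.sqrt s * |aa s| ≤ 2 * Real.exp (-s/4) := by
  have he := Real.exp_pos (-s/4)
  rw [aa, abs_mul, abs_of_pos (by positivity : (0:ℝ) < 2 * Real.exp (-s/4))]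
  nlinarith [hv_b hs, abs_nonneg (vv s), hr_pos s (hs0 hs)]

lemma ha1_b (hs : 1 ≤ s) : Real.sqrt s * |a1 s| ≤ 3 * Real.exp (-s/4) := by
  have he := Real.exp_pos (-s/4)
  have h := abs_add_le (-Real.exp (-s/4)/2 * vv s) (2 * Real.exp (-s/4) * v1 s)
  rw [abs_mul, abs_mul] at h
  rw [show |(-Real.exp (-s/4)/2)| = Real.exp (-s/4)/2 by
    rw [show (-Real.exp (-s/4)/2) = -(Real.exp (-s/4)/2) by ring, abs_neg,
      abs_of_pos (by positivity)]] at h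
  rw [abs_of_pos (by positivity : (0:ℝ) < 2 * Real.exp (-s/4))] at h
  rw [a1]
  nlinarith [hv_b hs, hv1_b hs, abs_nonneg (vv s), abs_nonneg (v1 s), hr_pos s (hs0 hs),
    mul_le_mul_of_nonneg_left h (Real.sqrt_nonneg s)]

lemma ha2_b (hs : 1 ≤ s) : Real.sqrt s * |a2 s| ≤ 9 * Real.exp (-s/4) := by
  have he := Real.exp_pos (-s/4)
  have h1 := abs_add_le (Real.exp (-s/4)/8 * vv s - Real.exp (-s/4)/2 * v1 s - Real.exp (-s/4)/2 * v1 s)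
    (2 * Real.exp (-s/4) * v2 s)
  have h2 := abs_sub (Real.exp (-s/4)/8 * vv s - Real.exp (-s/4)/2 * v1 s) (Real.exp (-s/4)/2 * v1 s)
  have h3 := abs_sub (Real.exp (-s/4)/8 * vv s) (Real.exp (-s/4)/2 * v1 s)
  simp only [abs_mul, abs_div, Real.abs_exp, (by norm_num : |(2:ℝ)| = 2),
    (by norm_num : |(8:ℝ)| = 8)] at h1 h2 h3
  rw [a2]
  nlinarith [hv_b hs, hv1_b hs, hv2_b hs, abs_nonneg (vv s), abs_nonneg (v1 s), abs_nonneg (v2 s),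
    hr_pos s (hs0 hs),
    mul_le_mul_of_nonneg_left h1 (Real.sqrt_nonneg s),
    mul_le_mul_of_nonneg_left h2 (Real.sqrt_nonneg s),
    mul_le_mul_of_nonneg_left h3 (Real.sqrt_nonneg s)]

end bounds

variable {M : Type*} [NormedAddCommGroup M] [NormedSpace ℝ M]

noncomputable def fstL : ℝ × ℝ →L[ℝ] ℝ := ContinuousLinearMap.fst ℝ ℝ ℝ
noncomputable def sndL : ℝ × ℝ →L[ℝ] ℝ := ContinuousLinearMap.snd ℝ ℝ ℝ

noncomputable def mk (d1 d2 : M) : ℝ × ℝ →L[ℝ] M :=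
  fstL.smulRight d1 + sndL.smulRight d2

@[simp] lemma mk_apply (d1 d2 : M) (v : ℝ × ℝ) : mk d1 d2 v = v.1 • d1 + v.2 • d2 := by
  simp [mk, fstL, sndL]

lemma clm_eq_mk (L : ℝ × ℝ →L[ℝ] M) : L = mk (L (1,0)) (L (0,1)) := by
  apply ContinuousLinearMap.ext; intro v
  have hv : v = v.1 • ((1,0) : ℝ × ℝ) + v.2 • ((0,1) : ℝ × ℝ) := by
    apply Prod.ext <;> simp
  rw [mk_apply]
  conv_lhs => rw [hv]
  rw [map_add, map_smul, map_smul]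

lemma hasFDerivAt_mk' {f : ℝ × ℝ → M} {L : ℝ × ℝ →L[ℝ] M} {p : ℝ × ℝ} {d1 d2 : M}
    (h : HasFDerivAt f L p) (e1 : L (1,0) = d1) (e2 : L (0,1) = d2) :
    HasFDerivAt f (mk d1 d2) p := by
  rw [← e1, ← e2, ← clm_eq_mk]; exact h

lemma norm_mk_le (d1 d2 : M) : ‖mk d1 d2‖ ≤ ‖d1‖ + ‖d2‖ := by
  apply ContinuousLinearMap.opNorm_le_bound _ (by positivity)
  intro v
  rw [mk_apply]
  calc ‖v.1 • d1 + v.2 • d2‖ ≤ ‖v.1 • d1‖ + ‖v.2 • d2‖ := norm_add_le _ _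
    _ = |v.1| * ‖d1‖ + |v.2| * ‖d2‖ := by rw [norm_smul, norm_smul]; simp
    _ ≤ ‖v‖ * ‖d1‖ + ‖v‖ * ‖d2‖ := by
        have h1 : |v.1| ≤ ‖v‖ := norm_fst_le v
        have h2 : |v.2| ≤ ‖v‖ := norm_snd_le v
        have := norm_nonneg d1; have := norm_nonneg d2
        nlinarith
    _ = (‖d1‖ + ‖d2‖) * ‖v‖ := by ring

lemma hasFDerivAt_mk_pair {f g : ℝ × ℝ → M} {p : ℝ × ℝ} {A1 A2 B1 B2 : M}
    (hf : HasFDerivAt f (mk A1 A2) p) (hg : HasFDerivAt g (mk B1 B2) p) :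
    HasFDerivAt (fun p => mk (f p) (g p)) (mk (mk A1 B1) (mk A2 B2)) p := by
  have h1 : HasFDerivAt (fun p => fstL.smulRight (f p))
      ((ContinuousLinearMap.smulRightL ℝ (ℝ × ℝ) M fstL).comp (mk A1 A2)) p :=
    (ContinuousLinearMap.smulRightL ℝ (ℝ × ℝ) M fstL).hasFDerivAt.comp p hf
  have h2 : HasFDerivAt (fun p => sndL.smulRight (g p))
      ((ContinuousLinearMap.smulRightL ℝ (ℝ × ℝ) M sndL).comp (mk B1 B2)) p :=
    (ContinuousLinearMap.smulRightL ℝ (ℝ × ℝ) M sndL).hasFDerivAt.comp p hg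
  have h := h1.add h2
  have heq : (fun p => fstL.smulRight (f p) + sndL.smulRight (g p))
      = fun p => mk (f p) (g p) := by
    funext p; rfl
  rw [show ((fun p => fstL.smulRight (f p)) + fun p => sndL.smulRight (g p)) = (fun p => mk (f p) (g p)) from heq] at h
  refine h.congr_fderiv ?_
  apply ContinuousLinearMap.ext; intro v
  apply ContinuousLinearMap.ext; intro w
  simp [mk, ContinuousLinearMap.smulRightL, fstL, sndL]
  module

lemma hasFDerivAt_prod3 {f g h : ℝ × ℝ → ℝ} {p : ℝ × ℝ} {a1 a2 b1 b2 c1 c2 : ℝ}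
    (hf : HasFDerivAt f (mk a1 a2) p) (hg : HasFDerivAt g (mk b1 b2) p)
    (hh : HasFDerivAt h (mk c1 c2) p) :
    HasFDerivAt (fun p => (f p, g p, h p)) (mk ((a1, b1, c1) : ℝ × ℝ × ℝ) (a2, b2, c2)) p := by
  refine hasFDerivAt_mk' (hf.prodMk (hg.prodMk hh)) ?_ ?_ <;> simp

lemma uu_def (s : ℝ) : uu s = Real.sqrt (1 - Real.exp (-s/2)) := rfl

-- ## two-variable part
lemma hq (p : ℝ × ℝ) :
    HasFDerivAt (fun p : ℝ × ℝ => p.1^2 + p.2^2) (mk (2*p.1) (2*p.2)) p := by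
  have hfun : (fun p : ℝ × ℝ => p.1^2 + p.2^2) = fun p : ℝ × ℝ => p.1*p.1 + p.2*p.2 := by
    funext p; ring
  rw [hfun]
  refine hasFDerivAt_mk' (((hasFDerivAt_fst).mul (hasFDerivAt_fst)).add
    ((hasFDerivAt_snd).mul (hasFDerivAt_snd))) ?_ ?_ <;> · simp; ring

lemma comp_q {φ : ℝ → ℝ} {φ' : ℝ} (p : ℝ × ℝ)
    (hφ : HasDerivAt φ φ' (p.1^2 + p.2^2)) :
    HasFDerivAt (fun p : ℝ × ℝ => φ (p.1^2 + p.2^2))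
      (mk (φ' * (2*p.1)) (φ' * (2*p.2))) p := by
  refine hasFDerivAt_mk' (hφ.comp_hasFDerivAt p (hq p)) ?_ ?_ <;> simp

-- the six scalar entry functions
noncomputable def e11 (p : ℝ × ℝ) : ℝ := aa (p.1^2+p.2^2) + 2*p.1^2*a1 (p.1^2+p.2^2)
noncomputable def e12 (p : ℝ × ℝ) : ℝ := 2*p.1*p.2*a1 (p.1^2+p.2^2)
noncomputable def e22 (p : ℝ × ℝ) : ℝ := aa (p.1^2+p.2^2) + 2*p.2^2*a1 (p.1^2+p.2^2)
noncomputable def e31 (p : ℝ × ℝ) : ℝ := -(2*p.1*Real.exp (-(p.1^2+p.2^2)/2))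
noncomputable def e32 (p : ℝ × ℝ) : ℝ := -(2*p.2*Real.exp (-(p.1^2+p.2^2)/2))

noncomputable def Dpsi (p : ℝ × ℝ) : ℝ × ℝ →L[ℝ] ℝ × ℝ × ℝ :=
  mk (e11 p, e12 p, e31 p) (e12 p, e22 p, e32 p)

lemma hF1 (p : ℝ × ℝ) (hp : 0 < p.1^2+p.2^2) :
    HasFDerivAt (fun p : ℝ × ℝ => aa (p.1^2+p.2^2) * p.1) (mk (e11 p) (e12 p)) p := by
  refine hasFDerivAt_mk' ((comp_q p (hd_aa _ hp)).mul hasFDerivAt_fst) ?_ ?_ <;>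
    · simp [e11, e12]; ring

lemma hF2 (p : ℝ × ℝ) (hp : 0 < p.1^2+p.2^2) :
    HasFDerivAt (fun p : ℝ × ℝ => aa (p.1^2+p.2^2) * p.2) (mk (e12 p) (e22 p)) p := by
  refine hasFDerivAt_mk' ((comp_q p (hd_aa _ hp)).mul hasFDerivAt_snd) ?_ ?_ <;>
    · simp [e22, e12]; ring

lemma hF3 (p : ℝ × ℝ) :
    HasFDerivAt (fun p : ℝ × ℝ => GG (p.1^2+p.2^2)) (mk (e31 p) (e32 p)) p := by
  refine hasFDerivAt_mk' (comp_q p (hd_GG _)) ?_ ?_ <;> · simp [e31, e32]; ring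

lemma hDpsiF (p : ℝ × ℝ) (hp : 0 < p.1^2+p.2^2) :
    HasFDerivAt (fun p : ℝ × ℝ =>
      (aa (p.1^2+p.2^2) * p.1, aa (p.1^2+p.2^2) * p.2, GG (p.1^2+p.2^2)))
      (Dpsi p) p :=
  hasFDerivAt_prod3 (hF1 p hp) (hF2 p hp) (hF3 p)

-- psiLump agrees with the nice form
lemma key_sqrt (s : ℝ) (hs : 0 < s) :
    Real.sqrt (1 - zprof (Real.sqrt s) ^ 2) = 2 * Real.exp (-s/4) * uu s := by
  have husq : uu s ^ 2 = 1 - Real.exp (-s/2) := by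
    rw [uu_def]; exact Real.sq_sqrt (hw0 s hs).le
  have hexp : Real.exp (-s/4) ^ 2 = Real.exp (-s/2) := by
    rw [sq, ← Real.exp_add]; ring_nf
  have h1 : 1 - zprof (Real.sqrt s) ^ 2 = (2 * Real.exp (-s/4) * uu s)^2 := by
    unfold zprof
    rw [Real.sq_sqrt hs.le]
    have : (2 * Real.exp (-s/4) * uu s)^2 = 4 * (Real.exp (-s/4)^2) * (uu s ^2) := by ring
    rw [this, hexp, husq]
    ring
  rw [h1, Real.sqrt_sq (mul_nonneg (by positivity) (hu_pos s hs).le)]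

lemma psi_eq (p : ℝ × ℝ) (hp : 0 < p.1^2+p.2^2) :
    psiLump p = (aa (p.1^2+p.2^2) * p.1, aa (p.1^2+p.2^2) * p.2, GG (p.1^2+p.2^2)) := by
  have hr := hr_pos _ hp
  unfold psiLump
  rw [key_sqrt _ hp]
  refine Prod.ext ?_ (Prod.ext ?_ ?_)
  · show 2 * Real.exp (-(p.1^2+p.2^2)/4) * uu (p.1^2+p.2^2) * p.1 / Real.sqrt (p.1^2+p.2^2)
      = aa (p.1^2+p.2^2) * p.1
    unfold aa vv; field_simp
  · show 2 * Real.exp (-(p.1^2+p.2^2)/4) * uu (p.1^2+p.2^2) * p.2 / Real.sqrt (p.1^2+p.2^2)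
      = aa (p.1^2+p.2^2) * p.2
    unfold aa vv; field_simp
  · show zprof (Real.sqrt (p.1^2+p.2^2)) = GG (p.1^2+p.2^2)
    unfold zprof GG
    rw [Real.sq_sqrt hp.le]

def Uset : Set (ℝ × ℝ) := {p : ℝ × ℝ | 0 < p.1^2 + p.2^2}

lemma hUopen : IsOpen Uset := by
  have : Continuous fun p : ℝ × ℝ => p.1^2 + p.2^2 := by continuity
  exact isOpen_lt continuous_const this

lemma hDpsi (p : ℝ × ℝ) (hp : p ∈ Uset) : HasFDerivAt psiLump (Dpsi p) p := by
  refine (hDpsiF p hp).congr_of_eventuallyEq ?_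
  filter_upwards [hUopen.mem_nhds hp] with x hx
  exact psi_eq x hx

-- second level
lemma h_e11 (p : ℝ × ℝ) (hp : 0 < p.1^2+p.2^2) :
    HasFDerivAt e11
      (mk (6*p.1*a1 (p.1^2+p.2^2) + 4*p.1^3*a2 (p.1^2+p.2^2))
          (2*p.2*a1 (p.1^2+p.2^2) + 4*p.1^2*p.2*a2 (p.1^2+p.2^2))) p := by
  have hfun : e11 = fun p : ℝ × ℝ => aa (p.1^2+p.2^2) + (2*(p.1*p.1))*a1 (p.1^2+p.2^2) := by
    funext p; unfold e11; ring
  rw [hfun]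
  refine hasFDerivAt_mk' ((comp_q p (hd_aa _ hp)).add
    ((((hasFDerivAt_fst).mul (hasFDerivAt_fst)).const_mul 2).mul (comp_q p (hd_a1 _ hp)))) ?_ ?_ <;>
    · simp; ring

lemma h_e12 (p : ℝ × ℝ) (hp : 0 < p.1^2+p.2^2) :
    HasFDerivAt e12
      (mk (2*p.2*a1 (p.1^2+p.2^2) + 4*p.1^2*p.2*a2 (p.1^2+p.2^2))
          (2*p.1*a1 (p.1^2+p.2^2) + 4*p.1*p.2^2*a2 (p.1^2+p.2^2))) p := by
  have hfun : e12 = fun p : ℝ × ℝ => (2*(p.1*p.2))*a1 (p.1^2+p.2^2) := by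
    funext p; unfold e12; ring
  rw [hfun]
  refine hasFDerivAt_mk' ((((hasFDerivAt_fst).mul (hasFDerivAt_snd)).const_mul 2).mul
    (comp_q p (hd_a1 _ hp))) ?_ ?_ <;> · simp; ring

lemma h_e22 (p : ℝ × ℝ) (hp : 0 < p.1^2+p.2^2) :
    HasFDerivAt e22
      (mk (2*p.1*a1 (p.1^2+p.2^2) + 4*p.1*p.2^2*a2 (p.1^2+p.2^2))
          (6*p.2*a1 (p.1^2+p.2^2) + 4*p.2^3*a2 (p.1^2+p.2^2))) p := by
  have hfun : e22 = fun p : ℝ × ℝ => aa (p.1^2+p.2^2) + (2*(p.2*p.2))*a1 (p.1^2+p.2^2) := by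
    funext p; unfold e22; ring
  rw [hfun]
  refine hasFDerivAt_mk' ((comp_q p (hd_aa _ hp)).add
    ((((hasFDerivAt_snd).mul (hasFDerivAt_snd)).const_mul 2).mul (comp_q p (hd_a1 _ hp)))) ?_ ?_ <;>
    · simp; ring

lemma h_e31 (p : ℝ × ℝ) :
    HasFDerivAt e31
      (mk ((2*p.1^2 - 2)*Real.exp (-(p.1^2+p.2^2)/2))
          (2*p.1*p.2*Real.exp (-(p.1^2+p.2^2)/2))) p := by
  have hfun : e31 = fun p : ℝ × ℝ => (-2*p.1)*Real.exp (-(p.1^2+p.2^2)/2) := by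
    funext p; unfold e31; ring
  rw [hfun]
  refine hasFDerivAt_mk' (((hasFDerivAt_fst).const_mul (-2)).mul
    (comp_q p (hd_exp2 _))) ?_ ?_ <;> · simp; ring

lemma h_e32 (p : ℝ × ℝ) :
    HasFDerivAt e32
      (mk (2*p.1*p.2*Real.exp (-(p.1^2+p.2^2)/2))
          ((2*p.2^2 - 2)*Real.exp (-(p.1^2+p.2^2)/2))) p := by
  have hfun : e32 = fun p : ℝ × ℝ => (-2*p.2)*Real.exp (-(p.1^2+p.2^2)/2) := by
    funext p; unfold e32; ring
  rw [hfun]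
  refine hasFDerivAt_mk' (((hasFDerivAt_snd).const_mul (-2)).mul
    (comp_q p (hd_exp2 _))) ?_ ?_ <;> · simp; ring

noncomputable def EE (p : ℝ × ℝ) : ℝ × ℝ →L[ℝ] (ℝ × ℝ →L[ℝ] ℝ × ℝ × ℝ) :=
  mk (mk (6*p.1*a1 (p.1^2+p.2^2) + 4*p.1^3*a2 (p.1^2+p.2^2),
          2*p.2*a1 (p.1^2+p.2^2) + 4*p.1^2*p.2*a2 (p.1^2+p.2^2),
          (2*p.1^2 - 2)*Real.exp (-(p.1^2+p.2^2)/2))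
         (2*p.2*a1 (p.1^2+p.2^2) + 4*p.1^2*p.2*a2 (p.1^2+p.2^2),
          2*p.1*a1 (p.1^2+p.2^2) + 4*p.1*p.2^2*a2 (p.1^2+p.2^2),
          2*p.1*p.2*Real.exp (-(p.1^2+p.2^2)/2)))
     (mk (2*p.2*a1 (p.1^2+p.2^2) + 4*p.1^2*p.2*a2 (p.1^2+p.2^2),
          2*p.1*a1 (p.1^2+p.2^2) + 4*p.1*p.2^2*a2 (p.1^2+p.2^2),
          2*p.1*p.2*Real.exp (-(p.1^2+p.2^2)/2))
         (2*p.1*a1 (p.1^2+p.2^2) + 4*p.1*p.2^2*a2 (p.1^2+p.2^2),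
          6*p.2*a1 (p.1^2+p.2^2) + 4*p.2^3*a2 (p.1^2+p.2^2),
          (2*p.2^2 - 2)*Real.exp (-(p.1^2+p.2^2)/2)))

lemma hDD (p : ℝ × ℝ) (hp : 0 < p.1^2+p.2^2) : HasFDerivAt Dpsi (EE p) p := by
  have h1 := hasFDerivAt_prod3 (h_e11 p hp) (h_e12 p hp) (h_e31 p)
  have h2 := hasFDerivAt_prod3 (h_e12 p hp) (h_e22 p hp) (h_e32 p)
  exact hasFDerivAt_mk_pair h1 h2


-- ## norm bounds
lemma norm_triple_le {x y z B : ℝ} (hx : |x| ≤ B) (hy : |y| ≤ B) (hz : |z| ≤ B) :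
    ‖((x, y, z) : ℝ × ℝ × ℝ)‖ ≤ B := by
  simp only [Prod.norm_def, Real.norm_eq_abs]
  exact max_le hx (max_le hy hz)

lemma haA {s : ℝ} (hs : 1 ≤ s) : |aa s| ≤ 2 * Real.exp (-s/4) := by
  nlinarith [ha_b hs, abs_nonneg (aa s), hr1 hs]

lemma fbound1 {s X : ℝ} (hs : 1 ≤ s) (hX2 : X^2 ≤ s) :
    |aa s + 2*X^2*a1 s| ≤ 500*(Real.sqrt s * Real.exp (-s/4)) := by
  have hE := Real.exp_pos (-s/4)
  have hr := hr1 hs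
  have hrs := hrsq s (by linarith)
  have h2 : |2*X^2*a1 s| = 2*X^2*|a1 s| := by
    rw [abs_mul, abs_of_nonneg (by positivity : (0:ℝ) ≤ 2*X^2)]
  have h3 : Real.sqrt s * (Real.sqrt s * |a1 s|) ≤ Real.sqrt s * (3*Real.exp (-s/4)) :=
    mul_le_mul_of_nonneg_left (ha1_b hs) (Real.sqrt_nonneg s)
  calc |aa s + 2*X^2*a1 s| ≤ |aa s| + |2*X^2*a1 s| := abs_add_le _ _
    _ ≤ 500*(Real.sqrt s*Real.exp (-s/4)) := by
        rw [h2]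
        nlinarith [haA hs, abs_nonneg (a1 s), sq_nonneg X,
          mul_le_mul_of_nonneg_right hX2 (abs_nonneg (a1 s))]

lemma fbound2 {s X Y : ℝ} (hs : 1 ≤ s) (hX : |X| ≤ Real.sqrt s) (hY : |Y| ≤ Real.sqrt s) :
    |2*X*Y*a1 s| ≤ 500*(Real.sqrt s * Real.exp (-s/4)) := by
  have hE := Real.exp_pos (-s/4)
  have hr := hr1 hs
  have habs : |2*X*Y*a1 s| = 2*(|X| * |Y|)*|a1 s| := by
    rw [abs_mul, abs_mul, abs_mul, (by norm_num : |(2:ℝ)| = 2)]; ring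
  have h1 : |X| * |Y| ≤ Real.sqrt s * Real.sqrt s :=
    mul_le_mul hX hY (abs_nonneg Y) (Real.sqrt_nonneg s)
  have h3 : Real.sqrt s * (Real.sqrt s * |a1 s|) ≤ Real.sqrt s * (3*Real.exp (-s/4)) :=
    mul_le_mul_of_nonneg_left (ha1_b hs) (Real.sqrt_nonneg s)
  rw [habs]
  nlinarith [abs_nonneg (a1 s), mul_le_mul_of_nonneg_right h1 (abs_nonneg (a1 s))]

lemma hTE {s : ℝ} (hs : 1 ≤ s) : Real.exp (-s/2) ≤ Real.exp (-s/4) :=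
  Real.exp_le_exp.mpr (by linarith)

lemma fbound3 {s X : ℝ} (hs : 1 ≤ s) (hX : |X| ≤ Real.sqrt s) :
    |-(2*X*Real.exp (-s/2))| ≤ 500*(Real.sqrt s * Real.exp (-s/4)) := by
  have hE := Real.exp_pos (-s/4)
  have hT := Real.exp_pos (-s/2)
  have hr := hr1 hs
  rw [abs_neg, abs_mul, abs_mul, Real.abs_exp]
  norm_num
  nlinarith [hTE hs, mul_le_mul_of_nonneg_right hX hT.le, abs_nonneg X]

lemma gbound1 {s X : ℝ} (hs : 1 ≤ s) (hX : |X| ≤ Real.sqrt s) :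
    |6*X*a1 s + 4*X^3*a2 s| ≤ 250*(s * Real.exp (-s/4)) := by
  have hE := Real.exp_pos (-s/4)
  have hr := hr1 hs
  have hrs := hrsq s (by linarith)
  have k1 : |6*X*a1 s| ≤ 18*Real.exp (-s/4) := by
    rw [abs_mul, abs_mul]
    norm_num
    nlinarith [ha1_b hs, mul_le_mul_of_nonneg_right hX (abs_nonneg (a1 s))]
  have k2 : |4*X^3*a2 s| ≤ 36*(s * Real.exp (-s/4)) := by
    rw [abs_mul, abs_mul, abs_pow]
    norm_num
    have p1 : |X|^3 ≤ Real.sqrt s^3 := pow_le_pow_left₀ (abs_nonneg X) hX 3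
    have p2 : |X|^3*|a2 s| ≤ Real.sqrt s^3*|a2 s| :=
      mul_le_mul_of_nonneg_right p1 (abs_nonneg (a2 s))
    have p3 : Real.sqrt s^3 = s * Real.sqrt s := by
      rw [pow_succ, hrs]
    have p4 : s*(Real.sqrt s*|a2 s|) ≤ s*(9*Real.exp (-s/4)) :=
      mul_le_mul_of_nonneg_left (ha2_b hs) (by linarith)
    have p5 : Real.sqrt s^3*|a2 s| = s*(Real.sqrt s*|a2 s|) := by rw [p3]; ring
    nlinarith [p2, p4, p5]
  calc |6*X*a1 s + 4*X^3*a2 s| ≤ |6*X*a1 s| + |4*X^3*a2 s| := abs_add_le _ _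
    _ ≤ 250*(s * Real.exp (-s/4)) := by
        nlinarith [mul_le_mul_of_nonneg_right hs hE.le]

lemma gbound2 {s X Y : ℝ} (hs : 1 ≤ s) (hX : |X| ≤ Real.sqrt s) (hY : |Y| ≤ Real.sqrt s) :
    |2*Y*a1 s + 4*X^2*Y*a2 s| ≤ 250*(s * Real.exp (-s/4)) := by
  have hE := Real.exp_pos (-s/4)
  have hr := hr1 hs
  have hrs := hrsq s (by linarith)
  have hX2 : X^2 ≤ s := by nlinarith [sq_abs X, sq_nonneg (|X| - Real.sqrt s), abs_nonneg X]
  have k1 : |2*Y*a1 s| ≤ 6*Real.exp (-s/4) := by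
    rw [abs_mul, abs_mul]
    norm_num
    nlinarith [ha1_b hs, mul_le_mul_of_nonneg_right hY (abs_nonneg (a1 s))]
  have k2 : |4*X^2*Y*a2 s| ≤ 36*(s * Real.exp (-s/4)) := by
    rw [abs_mul, abs_mul, abs_mul, abs_of_nonneg (sq_nonneg X),
      (by norm_num : |(4:ℝ)| = 4)]
    have p1 : X^2*|Y| ≤ s*Real.sqrt s := by
      nlinarith [mul_le_mul_of_nonneg_left hY (sq_nonneg X), abs_nonneg Y, Real.sqrt_nonneg s]
    have p2 : X^2*|Y| * |a2 s| ≤ s*(Real.sqrt s*|a2 s|) := by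
      nlinarith [mul_le_mul_of_nonneg_right p1 (abs_nonneg (a2 s))]
    have p4 : s*(Real.sqrt s*|a2 s|) ≤ s*(9*Real.exp (-s/4)) :=
      mul_le_mul_of_nonneg_left (ha2_b hs) (by linarith)
    nlinarith
  calc |2*Y*a1 s + 4*X^2*Y*a2 s| ≤ |2*Y*a1 s| + |4*X^2*Y*a2 s| := abs_add_le _ _
    _ ≤ 250*(s * Real.exp (-s/4)) := by
        nlinarith [mul_le_mul_of_nonneg_right hs hE.le]

lemma gbound3 {s X : ℝ} (hs : 1 ≤ s) (hX2 : X^2 ≤ s) :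
    |(2*X^2 - 2)*Real.exp (-s/2)| ≤ 250*(s * Real.exp (-s/4)) := by
  have hE := Real.exp_pos (-s/4)
  have hT := Real.exp_pos (-s/2)
  rw [abs_mul, Real.abs_exp]
  have h1 : |2*X^2 - 2| ≤ 4*s := abs_le.mpr ⟨by nlinarith [sq_nonneg X], by nlinarith⟩
  nlinarith [hTE hs, mul_le_mul_of_nonneg_right h1 hT.le, abs_nonneg (2*X^2-2)]

lemma gbound4 {s X Y : ℝ} (hs : 1 ≤ s) (hX : |X| ≤ Real.sqrt s) (hY : |Y| ≤ Real.sqrt s) :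
    |2*X*Y*Real.exp (-s/2)| ≤ 250*(s * Real.exp (-s/4)) := by
  have hE := Real.exp_pos (-s/4)
  have hT := Real.exp_pos (-s/2)
  have hrs := hrsq s (by linarith)
  rw [abs_mul, abs_mul, abs_mul, Real.abs_exp]
  norm_num
  have h1 : |X| * |Y| ≤ s := by nlinarith [mul_le_mul hX hY (abs_nonneg Y) (Real.sqrt_nonneg s)]
  nlinarith [hTE hs, mul_le_mul_of_nonneg_right h1 hT.le, abs_nonneg X, abs_nonneg Y]

end HH

set_option maxHeartbeats 2000000 in
/-- Gaussian decay of the first and second derivatives of the hedgehog lump: there are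
constants `C, R* > 0` such that for `R = √(X²+Y²) ≥ R*`, the first derivatives are bounded
by `C R e^{-R²/4}` and the second derivatives by `C R² e^{-R²/4}`. -/
theorem stmt12 :
    ∃ C > (0 : ℝ), ∃ Rstar > (0 : ℝ), ∀ p : ℝ × ℝ,
      Rstar ≤ Real.sqrt (p.1 ^ 2 + p.2 ^ 2) →
      ‖fderiv ℝ psiLump p‖ ≤
          C * Real.sqrt (p.1 ^ 2 + p.2 ^ 2) * Real.exp (-(p.1 ^ 2 + p.2 ^ 2) / 4) ∧
      ‖fderiv ℝ (fderiv ℝ psiLump) p‖ ≤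
          C * (p.1 ^ 2 + p.2 ^ 2) * Real.exp (-(p.1 ^ 2 + p.2 ^ 2) / 4) := by
  refine ⟨1000, by norm_num, 1, by norm_num, fun p hR => ?_⟩
  have hs0' : (0:ℝ) ≤ p.1^2 + p.2^2 := by positivity
  have hs1 : 1 ≤ p.1^2 + p.2^2 := by nlinarith [Real.sq_sqrt hs0', Real.sqrt_nonneg (p.1^2+p.2^2)]
  have hp : 0 < p.1^2 + p.2^2 := by linarith
  have hpU : p ∈ HH.Uset := hp
  have hX : |p.1| ≤ Real.sqrt (p.1^2+p.2^2) := by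
    rw [← Real.sqrt_sq_eq_abs]
    exact Real.sqrt_le_sqrt (by nlinarith [sq_nonneg p.2])
  have hY : |p.2| ≤ Real.sqrt (p.1^2+p.2^2) := by
    rw [← Real.sqrt_sq_eq_abs]
    exact Real.sqrt_le_sqrt (by nlinarith [sq_nonneg p.1])
  have hX2 : p.1^2 ≤ p.1^2+p.2^2 := by nlinarith [sq_nonneg p.2]
  have hY2 : p.2^2 ≤ p.1^2+p.2^2 := by nlinarith [sq_nonneg p.1]
  constructor
  · rw [(HH.hDpsi p hpU).fderiv]
    have hcol1 : ‖((HH.e11 p, HH.e12 p, HH.e31 p) : ℝ × ℝ × ℝ)‖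
        ≤ 500*(Real.sqrt (p.1^2+p.2^2) * Real.exp (-(p.1^2+p.2^2)/4)) :=
      HH.norm_triple_le (HH.fbound1 hs1 hX2) (HH.fbound2 hs1 hX hY) (HH.fbound3 hs1 hX)
    have hcol2 : ‖((HH.e12 p, HH.e22 p, HH.e32 p) : ℝ × ℝ × ℝ)‖
        ≤ 500*(Real.sqrt (p.1^2+p.2^2) * Real.exp (-(p.1^2+p.2^2)/4)) :=
      HH.norm_triple_le (HH.fbound2 hs1 hX hY) (HH.fbound1 hs1 hY2) (HH.fbound3 hs1 hY)
    calc ‖HH.Dpsi p‖ ≤ ‖((HH.e11 p, HH.e12 p, HH.e31 p) : ℝ × ℝ × ℝ)‖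
          + ‖((HH.e12 p, HH.e22 p, HH.e32 p) : ℝ × ℝ × ℝ)‖ := HH.norm_mk_le _ _
      _ ≤ 1000 * Real.sqrt (p.1^2+p.2^2) * Real.exp (-(p.1^2+p.2^2)/4) := by linarith
  · have hev : fderiv ℝ psiLump =ᶠ[nhds p] HH.Dpsi := by
      filter_upwards [HH.hUopen.mem_nhds hpU] with x hx
      exact (HH.hDpsi x hx).fderiv
    rw [hev.fderiv_eq, (HH.hDD p hp).fderiv]
    have hA1 : ‖((6*p.1*HH.a1 (p.1^2+p.2^2) + 4*p.1^3*HH.a2 (p.1^2+p.2^2),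
        2*p.2*HH.a1 (p.1^2+p.2^2) + 4*p.1^2*p.2*HH.a2 (p.1^2+p.2^2),
        (2*p.1^2 - 2)*Real.exp (-(p.1^2+p.2^2)/2)) : ℝ × ℝ × ℝ)‖
        ≤ 250*((p.1^2+p.2^2)*Real.exp (-(p.1^2+p.2^2)/4)) :=
      HH.norm_triple_le (HH.gbound1 hs1 hX) (HH.gbound2 hs1 hX hY) (HH.gbound3 hs1 hX2)
    have hB1 : ‖((2*p.2*HH.a1 (p.1^2+p.2^2) + 4*p.1^2*p.2*HH.a2 (p.1^2+p.2^2),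
        2*p.1*HH.a1 (p.1^2+p.2^2) + 4*p.1*p.2^2*HH.a2 (p.1^2+p.2^2),
        2*p.1*p.2*Real.exp (-(p.1^2+p.2^2)/2)) : ℝ × ℝ × ℝ)‖
        ≤ 250*((p.1^2+p.2^2)*Real.exp (-(p.1^2+p.2^2)/4)) := by
      refine HH.norm_triple_le (HH.gbound2 hs1 hX hY) ?_ (HH.gbound4 hs1 hX hY)
      rw [show 2*p.1*HH.a1 (p.1^2+p.2^2) + 4*p.1*p.2^2*HH.a2 (p.1^2+p.2^2)
        = 2*p.1*HH.a1 (p.1^2+p.2^2) + 4*p.2^2*p.1*HH.a2 (p.1^2+p.2^2) by ring]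
      exact HH.gbound2 hs1 hY hX
    have hB2 : ‖((2*p.1*HH.a1 (p.1^2+p.2^2) + 4*p.1*p.2^2*HH.a2 (p.1^2+p.2^2),
        6*p.2*HH.a1 (p.1^2+p.2^2) + 4*p.2^3*HH.a2 (p.1^2+p.2^2),
        (2*p.2^2 - 2)*Real.exp (-(p.1^2+p.2^2)/2)) : ℝ × ℝ × ℝ)‖
        ≤ 250*((p.1^2+p.2^2)*Real.exp (-(p.1^2+p.2^2)/4)) := by
      refine HH.norm_triple_le ?_ (HH.gbound1 hs1 hY) (HH.gbound3 hs1 hY2)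
      rw [show 2*p.1*HH.a1 (p.1^2+p.2^2) + 4*p.1*p.2^2*HH.a2 (p.1^2+p.2^2)
        = 2*p.1*HH.a1 (p.1^2+p.2^2) + 4*p.2^2*p.1*HH.a2 (p.1^2+p.2^2) by ring]
      exact HH.gbound2 hs1 hY hX
    have m1 := HH.norm_mk_le (M := ℝ × ℝ × ℝ)
      (6*p.1*HH.a1 (p.1^2+p.2^2) + 4*p.1^3*HH.a2 (p.1^2+p.2^2),
        2*p.2*HH.a1 (p.1^2+p.2^2) + 4*p.1^2*p.2*HH.a2 (p.1^2+p.2^2),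
        (2*p.1^2 - 2)*Real.exp (-(p.1^2+p.2^2)/2))
      (2*p.2*HH.a1 (p.1^2+p.2^2) + 4*p.1^2*p.2*HH.a2 (p.1^2+p.2^2),
        2*p.1*HH.a1 (p.1^2+p.2^2) + 4*p.1*p.2^2*HH.a2 (p.1^2+p.2^2),
        2*p.1*p.2*Real.exp (-(p.1^2+p.2^2)/2))
    have m2 := HH.norm_mk_le (M := ℝ × ℝ × ℝ)
      (2*p.2*HH.a1 (p.1^2+p.2^2) + 4*p.1^2*p.2*HH.a2 (p.1^2+p.2^2),
        2*p.1*HH.a1 (p.1^2+p.2^2) + 4*p.1*p.2^2*HH.a2 (p.1^2+p.2^2),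
        2*p.1*p.2*Real.exp (-(p.1^2+p.2^2)/2))
      (2*p.1*HH.a1 (p.1^2+p.2^2) + 4*p.1*p.2^2*HH.a2 (p.1^2+p.2^2),
        6*p.2*HH.a1 (p.1^2+p.2^2) + 4*p.2^3*HH.a2 (p.1^2+p.2^2),
        (2*p.2^2 - 2)*Real.exp (-(p.1^2+p.2^2)/2))
    have m0 := HH.norm_mk_le (M := ℝ × ℝ →L[ℝ] ℝ × ℝ × ℝ)
      (HH.mk (6*p.1*HH.a1 (p.1^2+p.2^2) + 4*p.1^3*HH.a2 (p.1^2+p.2^2),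
        2*p.2*HH.a1 (p.1^2+p.2^2) + 4*p.1^2*p.2*HH.a2 (p.1^2+p.2^2),
        (2*p.1^2 - 2)*Real.exp (-(p.1^2+p.2^2)/2))
      (2*p.2*HH.a1 (p.1^2+p.2^2) + 4*p.1^2*p.2*HH.a2 (p.1^2+p.2^2),
        2*p.1*HH.a1 (p.1^2+p.2^2) + 4*p.1*p.2^2*HH.a2 (p.1^2+p.2^2),
        2*p.1*p.2*Real.exp (-(p.1^2+p.2^2)/2)))
      (HH.mk (2*p.2*HH.a1 (p.1^2+p.2^2) + 4*p.1^2*p.2*HH.a2 (p.1^2+p.2^2),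
        2*p.1*HH.a1 (p.1^2+p.2^2) + 4*p.1*p.2^2*HH.a2 (p.1^2+p.2^2),
        2*p.1*p.2*Real.exp (-(p.1^2+p.2^2)/2))
      (2*p.1*HH.a1 (p.1^2+p.2^2) + 4*p.1*p.2^2*HH.a2 (p.1^2+p.2^2),
        6*p.2*HH.a1 (p.1^2+p.2^2) + 4*p.2^3*HH.a2 (p.1^2+p.2^2),
        (2*p.2^2 - 2)*Real.exp (-(p.1^2+p.2^2)/2)))
    have hEEeq : HH.EE p = HH.mk
      (HH.mk (6*p.1*HH.a1 (p.1^2+p.2^2) + 4*p.1^3*HH.a2 (p.1^2+p.2^2),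
        2*p.2*HH.a1 (p.1^2+p.2^2) + 4*p.1^2*p.2*HH.a2 (p.1^2+p.2^2),
        (2*p.1^2 - 2)*Real.exp (-(p.1^2+p.2^2)/2))
      (2*p.2*HH.a1 (p.1^2+p.2^2) + 4*p.1^2*p.2*HH.a2 (p.1^2+p.2^2),
        2*p.1*HH.a1 (p.1^2+p.2^2) + 4*p.1*p.2^2*HH.a2 (p.1^2+p.2^2),
        2*p.1*p.2*Real.exp (-(p.1^2+p.2^2)/2)))
      (HH.mk (2*p.2*HH.a1 (p.1^2+p.2^2) + 4*p.1^2*p.2*HH.a2 (p.1^2+p.2^2),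
        2*p.1*HH.a1 (p.1^2+p.2^2) + 4*p.1*p.2^2*HH.a2 (p.1^2+p.2^2),
        2*p.1*p.2*Real.exp (-(p.1^2+p.2^2)/2))
      (2*p.1*HH.a1 (p.1^2+p.2^2) + 4*p.1*p.2^2*HH.a2 (p.1^2+p.2^2),
        6*p.2*HH.a1 (p.1^2+p.2^2) + 4*p.2^3*HH.a2 (p.1^2+p.2^2),
        (2*p.2^2 - 2)*Real.exp (-(p.1^2+p.2^2)/2))) := rfl
    rw [hEEeq]
    refine le_trans m0 ?_
    linarith
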